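/- arXiv:2409.03980 — 3 statements merged into one kernel-verified Lean document; each statement's English description precedes it below -/
import Mathlib

section
/- Suppose M* ∈ ℝ^{n×m} is additive and the observations are M_{kℓ} = M*_{kℓ} + E_{kℓ} for (k,ℓ) ∈ Ω, where the E_{kℓ} are independent, mean-zero, square-integrable random variables with Var[E_{kℓ}] ≤ σ². Then for every (i,j) such that u_i and v_j lie in the same connected component of G(Ω), the electrical flow estimator satisfies Var[M̂^EFE_{ij}] ≤ σ² R(u_i,v_j); moreover, if Var[E_{kℓ}] = σ² for every (k,ℓ) ∈ Ω, then Var[M̂^EFE_{ij}] = σ² R(u_i,v_j). -/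
/-!
STATEMENT 4: Under independent mean-zero noise with variance at most `σ²`, the
electrical flow estimator satisfies `Var[M̂^EFE_{ij}] ≤ σ² R(u_i,v_j)`, with
equality if every noise variance equals `σ²`.
-/

open Finset MeasureTheory ProbabilityTheory

/-- The bipartite observation graph `G(Ω)`: row vertices `Sum.inl k` and column
vertices `Sum.inr ℓ`, with an edge iff `(k,ℓ) ∈ Ω`. -/
def bipGraph {n m : ℕ} (Ω : Finset (Fin n × Fin m)) : SimpleGraph (Fin n ⊕ Fin m) where
  Adj x y :=
    match x, y with
    | Sum.inl k, Sum.inr l => (k, l) ∈ Ω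
    | Sum.inr l, Sum.inl k => (k, l) ∈ Ω
    | _, _ => False
  symm := ⟨by
    rintro (k | k) (l | l) h
    · exact h.elim
    · exact h
    · exact h
    · exact h.elim⟩
  loopless := ⟨by rintro (k | k) h <;> exact h⟩

/-- The graph Laplacian `L = D − A` of `G(Ω)`, with vertices ordered rows then columns. -/
noncomputable def lap {n m : ℕ} (Ω : Finset (Fin n × Fin m)) :
    Matrix (Fin n ⊕ Fin m) (Fin n ⊕ Fin m) ℝ :=
  fun x y =>
    (if x = y then
      (match x with
       | Sum.inl k => ((Ω.filter fun p => p.1 = k).card : ℝ)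
       | Sum.inr l => ((Ω.filter fun p => p.2 = l).card : ℝ))
     else 0)
    -
    (match x, y with
     | Sum.inl k, Sum.inr l => if (k, l) ∈ Ω then (1 : ℝ) else 0
     | Sum.inr l, Sum.inl k => if (k, l) ∈ Ω then (1 : ℝ) else 0
     | _, _ => 0)

/-- The vector `e_i − e_{n+j}` of `ℝ^{n+m}`. -/
def stdVec {n m : ℕ} (i : Fin n) (j : Fin m) : (Fin n ⊕ Fin m) → ℝ :=
  fun x => (if x = Sum.inl i then 1 else 0) - (if x = Sum.inr j then 1 else 0)

/-- `v` is a voltage vector for the pair `(i,j)`: `L v = e_i − e_{n+j}`.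
The effective resistance `R(u_i, v_j)` is `(e_i − e_{n+j})ᵀ v = v_i − v_{n+j}`
for any voltage vector `v`. -/
noncomputable def IsVoltage {n m : ℕ} (Ω : Finset (Fin n × Fin m)) (i : Fin n) (j : Fin m)
    (v : (Fin n ⊕ Fin m) → ℝ) : Prop :=
  (lap Ω).mulVec v = stdVec i j

lemma stdVec_inl {n m : ℕ} (i : Fin n) (j : Fin m) (k : Fin n) :
    stdVec i j (Sum.inl k) = if k = i then 1 else 0 := by
  simp [stdVec, eq_comm]

lemma stdVec_inr {n m : ℕ} (i : Fin n) (j : Fin m) (l : Fin m) :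
    stdVec i j (Sum.inr l) = -(if l = j then 1 else 0) := by
  simp [stdVec, eq_comm]

lemma stdVec_dot {n m : ℕ} (i : Fin n) (j : Fin m) (v : (Fin n ⊕ Fin m) → ℝ) :
    ∑ x, stdVec i j x * v x = v (Sum.inl i) - v (Sum.inr j) := by
  simp [stdVec, sub_mul, Finset.sum_sub_distrib, ite_mul, Finset.sum_ite_eq']

lemma lap_eq_sum {n m : ℕ} (Ω : Finset (Fin n × Fin m)) (x y : Fin n ⊕ Fin m) :
    lap Ω x y = ∑ p ∈ Ω, stdVec p.1 p.2 x * stdVec p.1 p.2 y := by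
  classical
  rcases x with k | l <;> rcases y with k' | l'
  · have hL : lap Ω (Sum.inl k) (Sum.inl k')
        = (if (Sum.inl k : Fin n ⊕ Fin m) = Sum.inl k' then
            ((Ω.filter fun p => p.1 = k).card : ℝ) else 0) - 0 := rfl
    rw [hL]
    simp only [stdVec_inl, Sum.inl.injEq, sub_zero]
    by_cases h : k = k'
    · subst h
      simp only [if_true]
      rw [Finset.card_filter]
      push_cast
      exact (Finset.sum_congr rfl fun p _ => by by_cases h1 : k = p.1 <;> simp [h1, eq_comm]).symm
    · rw [if_neg (by simpa using h)]
      refine (Finset.sum_eq_zero fun p _ => ?_).symm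
      by_cases h1 : k = p.1
      · by_cases h2 : k' = p.1
        · exact absurd (h1.trans h2.symm) h
        · simp [h2]
      · simp [h1]
  · have hL : lap Ω (Sum.inl k) (Sum.inr l')
        = 0 - (if (k, l') ∈ Ω then (1:ℝ) else 0) := by
      show (if _ = _ then _ else 0) - _ = _
      rw [if_neg (by simp)]
    rw [hL]
    have : ∀ p ∈ Ω, stdVec p.1 p.2 (Sum.inl k) * stdVec p.1 p.2 (Sum.inr l')
        = -(if p = (k, l') then 1 else 0) := by
      intro p _
      rw [stdVec_inl, stdVec_inr]
      by_cases h1 : k = p.1 <;> by_cases h2 : l' = p.2 <;>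
        simp [h1, h2, Prod.ext_iff, eq_comm]
    rw [Finset.sum_congr rfl this, Finset.sum_neg_distrib, Finset.sum_ite_eq' Ω (k, l')]
    simp
  · have hL : lap Ω (Sum.inr l) (Sum.inl k')
        = 0 - (if (k', l) ∈ Ω then (1:ℝ) else 0) := by
      show (if _ = _ then _ else 0) - _ = _
      rw [if_neg (by simp)]
    rw [hL]
    have : ∀ p ∈ Ω, stdVec p.1 p.2 (Sum.inr l) * stdVec p.1 p.2 (Sum.inl k')
        = -(if p = (k', l) then 1 else 0) := by
      intro p _
      rw [stdVec_inl, stdVec_inr]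
      by_cases h1 : k' = p.1 <;> by_cases h2 : l = p.2 <;>
        simp [h1, h2, Prod.ext_iff, eq_comm]
    rw [Finset.sum_congr rfl this, Finset.sum_neg_distrib, Finset.sum_ite_eq' Ω (k', l)]
    simp
  · have hL : lap Ω (Sum.inr l) (Sum.inr l')
        = (if (Sum.inr l : Fin n ⊕ Fin m) = Sum.inr l' then
            ((Ω.filter fun p => p.2 = l).card : ℝ) else 0) - 0 := rfl
    rw [hL]
    simp only [stdVec_inr, Sum.inr.injEq, sub_zero, neg_mul_neg]
    by_cases h : l = l'
    · subst h
      simp only [if_true]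
      rw [Finset.card_filter]
      push_cast
      exact (Finset.sum_congr rfl fun p _ => by by_cases h1 : l = p.2 <;> simp [h1, eq_comm]).symm
    · rw [if_neg (by simpa using h)]
      refine (Finset.sum_eq_zero fun p _ => ?_).symm
      by_cases h1 : l = p.2
      · by_cases h2 : l' = p.2
        · exact absurd (h1.trans h2.symm) h
        · simp [h2]
      · simp [h1]

lemma energy {n m : ℕ} (Ω : Finset (Fin n × Fin m)) (v : (Fin n ⊕ Fin m) → ℝ) :
    ∑ x, v x * (lap Ω).mulVec v x
      = ∑ p ∈ Ω, (v (Sum.inl p.1) - v (Sum.inr p.2)) ^ 2 := by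
  classical
  have hmv : ∀ x, (lap Ω).mulVec v x
      = ∑ p ∈ Ω, stdVec p.1 p.2 x * (v (Sum.inl p.1) - v (Sum.inr p.2)) := by
    intro x
    unfold Matrix.mulVec dotProduct
    simp_rw [lap_eq_sum, Finset.sum_mul]
    rw [Finset.sum_comm]
    refine Finset.sum_congr rfl fun p _ => ?_
    rw [← stdVec_dot p.1 p.2 v, Finset.mul_sum]
    exact Finset.sum_congr rfl fun y _ => by ring
  simp_rw [hmv, Finset.mul_sum]
  rw [Finset.sum_comm]
  refine Finset.sum_congr rfl fun p _ => ?_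
  have := stdVec_dot p.1 p.2 v
  calc ∑ x, v x * (stdVec p.1 p.2 x * (v (Sum.inl p.1) - v (Sum.inr p.2)))
      = (∑ x, stdVec p.1 p.2 x * v x) * (v (Sum.inl p.1) - v (Sum.inr p.2)) := by
        rw [Finset.sum_mul]; exact Finset.sum_congr rfl fun y _ => by ring
    _ = _ := by rw [this]; ring

lemma var_const_add {Ω : Type*} [MeasurableSpace Ω] (μ : Measure Ω) [IsProbabilityMeasure μ]
    (c : ℝ) (X : Ω → ℝ) (hX : Integrable X μ) :
    variance (fun ω => c + X ω) μ = variance X μ := by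
  have hint : (∫ ω, (c + X ω) ∂μ) = c + ∫ ω, X ω ∂μ := by
    rw [integral_add (integrable_const c) hX]; simp
  unfold variance evariance
  congr 1
  refine lintegral_congr fun ω => ?_
  rw [hint]
  norm_num

theorem stmt4 {n m : ℕ} (Ω : Finset (Fin n × Fin m))
    (a : Fin n → ℝ) (b : Fin m → ℝ) (σ : ℝ)
    {ΩP : Type*} [MeasurableSpace ΩP] (μ : Measure ΩP) [IsProbabilityMeasure μ]
    (E : Fin n × Fin m → ΩP → ℝ)
    (hmeas : ∀ p ∈ Ω, Measurable (E p))
    (hindep : iIndepFun (fun p : {q // q ∈ Ω} => E p.1) μ)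
    (hL2 : ∀ p ∈ Ω, MemLp (E p) 2 μ)
    (hmean : ∀ p ∈ Ω, ∫ ω, E p ω ∂μ = 0)
    (hvar : ∀ p ∈ Ω, variance (E p) μ ≤ σ ^ 2)
    (i : Fin n) (j : Fin m)
    (hconn : (bipGraph Ω).Reachable (Sum.inl i) (Sum.inr j))
    (v : (Fin n ⊕ Fin m) → ℝ) (hv : IsVoltage Ω i j v) :
    variance
        (fun ω => ∑ p ∈ Ω, (v (Sum.inl p.1) - v (Sum.inr p.2)) * (a p.1 + b p.2 + E p ω)) μ
      ≤ σ ^ 2 * (v (Sum.inl i) - v (Sum.inr j)) ∧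
    ((∀ p ∈ Ω, variance (E p) μ = σ ^ 2) →
      variance
          (fun ω => ∑ p ∈ Ω, (v (Sum.inl p.1) - v (Sum.inr p.2)) * (a p.1 + b p.2 + E p ω)) μ
        = σ ^ 2 * (v (Sum.inl i) - v (Sum.inr j))) := by
  classical
  unfold IsVoltage at hv
  set c : Fin n × Fin m → ℝ := fun p => v (Sum.inl p.1) - v (Sum.inr p.2) with hc
  have key : ∑ p ∈ Ω, c p ^ 2 = v (Sum.inl i) - v (Sum.inr j) := by
    rw [← stdVec_dot i j v, ← hv, ← energy Ω v]
    exact Finset.sum_congr rfl fun x _ => by ring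
  have hEst : (fun ω => ∑ p ∈ Ω, c p * (a p.1 + b p.2 + E p ω))
      = fun ω => (∑ p ∈ Ω, c p * (a p.1 + b p.2)) + ∑ p ∈ Ω, c p * E p ω := by
    funext ω
    rw [← Finset.sum_add_distrib]
    exact Finset.sum_congr rfl fun p _ => by ring
  have hInt : Integrable (fun ω => ∑ p ∈ Ω, c p * E p ω) μ :=
    integrable_finset_sum _ fun p hp => ((hL2 p hp).integrable one_le_two).const_mul _
  have hVarE : variance (fun ω => ∑ p ∈ Ω, c p * (a p.1 + b p.2 + E p ω)) μ
      = ∑ p ∈ Ω, c p ^ 2 * variance (E p) μ := by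
    rw [hEst, var_const_add μ _ _ hInt]
    have hfun : (fun ω => ∑ p ∈ Ω, c p * E p ω)
        = ∑ p ∈ Ω, (fun ω => c p * E p ω) := by
      funext ω; rw [Finset.sum_apply]
    have hpair : Set.Pairwise ↑Ω fun p q =>
        IndepFun (fun ω => c p * E p ω) (fun ω => c q * E q ω) μ := by
      intro p hp q hq hpq
      have hne : (⟨p, Finset.mem_coe.mp hp⟩ : {q // q ∈ Ω})
          ≠ ⟨q, Finset.mem_coe.mp hq⟩ := by simpa [Subtype.ext_iff] using hpq
      exact (hindep.indepFun hne).comp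
        (measurable_const_mul (c p)) (measurable_const_mul (c q))
    rw [hfun, IndepFun.variance_sum (fun p hp => (hL2 p hp).const_mul (c p)) hpair]
    exact Finset.sum_congr rfl fun p _ => variance_const_mul (c p) (E p) μ
  constructor
  · rw [hVarE, ← key, Finset.mul_sum]
    refine Finset.sum_le_sum fun p hp => ?_
    rw [mul_comm (σ ^ 2)]
    exact mul_le_mul_of_nonneg_left (hvar p hp) (sq_nonneg _)
  · intro hall
    rw [hVarE, ← key, Finset.mul_sum]
    exact Finset.sum_congr rfl fun p hp => by rw [hall p hp, mul_comm]
end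

section
/- Fix observed values M_{kℓ} ∈ ℝ for (k,ℓ) ∈ Ω. Let (â, b̂) ∈ ℝ^n × ℝ^m be the minimizer of f(a,b) = ∑_{(k,ℓ)∈Ω} (a_k + b_ℓ − M_{kℓ})² having minimum Euclidean norm among all minimizers. Then for every (i,j) such that u_i and v_j lie in the same connected component of G(Ω), and for any voltage vector v for (i,j): â_i + b̂_j = ∑_{(k,ℓ)∈Ω} (v_k − v_{n+ℓ}) M_{kℓ}, i.e. the least squares estimator equals the electrical flow estimator. -/
/-!
STATEMENT 7: The minimum-norm least squares estimator equals the electrical flow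
estimator: if `(â,b̂)` minimizes `∑_{(k,ℓ)∈Ω}(a_k+b_ℓ−M_{kℓ})²` with minimum
Euclidean norm among minimizers, then for every connected `(i,j)` and every
voltage vector `v` for `(i,j)`, `â_i + b̂_j = ∑_{(k,ℓ)∈Ω}(v_k − v_{n+ℓ}) M_{kℓ}`.
-/

open Finset

section Helpers

lemma quadStat {S C : ℝ} (hC : 0 ≤ C) (h : ∀ t : ℝ, 0 ≤ 2*t*S + t^2*C) : S = 0 := by
  have hc1 : (0:ℝ) < C + 1 := by linarith
  have h2 := h (-S/(C+1))
  have hexp : 2*(-S/(C+1))*S + (-S/(C+1))^2*C = (S^2*C - 2*S^2*(C+1))/(C+1)^2 := by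
    field_simp; ring
  rw [hexp, le_div_iff₀ (by positivity)] at h2
  have h5 : S^2 ≤ 0 := by nlinarith [sq_nonneg S]
  have h6 : S^2 = 0 := le_antisymm h5 (sq_nonneg S)
  exact pow_eq_zero_iff (by norm_num) |>.mp h6

lemma sumElem {n m : ℕ} (Ω : Finset (Fin n × Fin m)) (g : Fin n × Fin m → ℝ) :
    ∑ p ∈ Ω, g p = ∑ k, ∑ l, if (k,l) ∈ Ω then g (k,l) else 0 := by
  rw [show (∑ p ∈ Ω, g p) = ∑ p ∈ Finset.univ ∩ Ω, g p by rw [Finset.univ_inter],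
    ← Finset.sum_ite_mem, Fintype.sum_prod_type]

lemma sumFilterFst {n m : ℕ} (Ω : Finset (Fin n × Fin m)) (k : Fin n) (f : Fin n × Fin m → ℝ) :
    ∑ p ∈ Ω, (if p.1 = k then f p else 0) = ∑ l, if (k,l) ∈ Ω then f (k,l) else 0 := by
  rw [sumElem]
  rw [Finset.sum_comm]
  apply Finset.sum_congr rfl; intro l _
  have h := Finset.sum_ite_eq' Finset.univ k (fun k' => if (k',l) ∈ Ω then f (k',l) else 0)
  simp only [Finset.mem_univ, if_true] at h
  rw [← h]
  exact Finset.sum_congr rfl fun k' _ => by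
    by_cases h1 : k' = k <;> by_cases h2 : (k',l) ∈ Ω <;> simp [h1, h2]

lemma sumFilterSnd {n m : ℕ} (Ω : Finset (Fin n × Fin m)) (l : Fin m) (f : Fin n × Fin m → ℝ) :
    ∑ p ∈ Ω, (if p.2 = l then f p else 0) = ∑ k, if (k,l) ∈ Ω then f (k,l) else 0 := by
  rw [sumElem]
  apply Finset.sum_congr rfl; intro k _
  have h := Finset.sum_ite_eq' Finset.univ l (fun l' => if (k,l') ∈ Ω then f (k,l') else 0)
  simp only [Finset.mem_univ, if_true] at h
  rw [← h]
  exact Finset.sum_congr rfl fun l' _ => by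
    by_cases h1 : l' = l <;> by_cases h2 : (k,l') ∈ Ω <;> simp [h1, h2]

lemma fiberFst {n m : ℕ} (Ω : Finset (Fin n × Fin m)) (g : Fin n → ℝ) (h : Fin n × Fin m → ℝ) :
    ∑ p ∈ Ω, g p.1 * h p = ∑ k, g k * ∑ p ∈ Ω, (if p.1 = k then h p else 0) := by
  symm
  calc ∑ k, g k * ∑ p ∈ Ω, (if p.1 = k then h p else 0)
      = ∑ k, ∑ p ∈ Ω, (if p.1 = k then g k * h p else 0) := by
        simp [Finset.mul_sum, mul_ite]
    _ = ∑ p ∈ Ω, ∑ k, (if p.1 = k then g k * h p else 0) := Finset.sum_comm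
    _ = ∑ p ∈ Ω, g p.1 * h p := by simp

lemma fiberSnd {n m : ℕ} (Ω : Finset (Fin n × Fin m)) (g : Fin m → ℝ) (h : Fin n × Fin m → ℝ) :
    ∑ p ∈ Ω, g p.2 * h p = ∑ l, g l * ∑ p ∈ Ω, (if p.2 = l then h p else 0) := by
  symm
  calc ∑ l, g l * ∑ p ∈ Ω, (if p.2 = l then h p else 0)
      = ∑ l, ∑ p ∈ Ω, (if p.2 = l then g l * h p else 0) := by
        simp [Finset.mul_sum, mul_ite]
    _ = ∑ p ∈ Ω, ∑ l, (if p.2 = l then g l * h p else 0) := Finset.sum_comm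
    _ = ∑ p ∈ Ω, g p.2 * h p := by simp

lemma cardFst {n m : ℕ} (Ω : Finset (Fin n × Fin m)) (k : Fin n) :
    ((Ω.filter fun p => p.1 = k).card : ℝ) = ∑ l, if (k,l) ∈ Ω then (1:ℝ) else 0 := by
  rw [← sumFilterFst Ω k (fun _ => (1:ℝ))]
  simp [Finset.sum_boole]

lemma cardSnd {n m : ℕ} (Ω : Finset (Fin n × Fin m)) (l : Fin m) :
    ((Ω.filter fun p => p.2 = l).card : ℝ) = ∑ k, if (k,l) ∈ Ω then (1:ℝ) else 0 := by
  rw [← sumFilterSnd Ω l (fun _ => (1:ℝ))]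
  simp [Finset.sum_boole]

end Helpers

/-- The least squares objective `f(a,b) = ∑_{(k,ℓ)∈Ω} (a_k + b_ℓ − M_{kℓ})²`. -/
def lseObj {n m : ℕ} (Ω : Finset (Fin n × Fin m)) (M : Fin n × Fin m → ℝ)
    (a : Fin n → ℝ) (b : Fin m → ℝ) : ℝ :=
  ∑ p ∈ Ω, (a p.1 + b p.2 - M p) ^ 2

section LapVals

lemma lap_inl_inl {n m : ℕ} (Ω : Finset (Fin n × Fin m)) (k k' : Fin n) :
    lap Ω (Sum.inl k) (Sum.inl k') = if k = k' then ((Ω.filter fun p => p.1 = k).card : ℝ) else 0 := by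
  show (if (Sum.inl k : Fin n ⊕ Fin m) = Sum.inl k' then ((Ω.filter fun p => p.1 = k).card : ℝ) else 0) - 0 = _
  simp [Sum.inl.injEq]

lemma lap_inl_inr {n m : ℕ} (Ω : Finset (Fin n × Fin m)) (k : Fin n) (l : Fin m) :
    lap Ω (Sum.inl k) (Sum.inr l) = -(if (k,l) ∈ Ω then (1:ℝ) else 0) := by
  show (if (Sum.inl k : Fin n ⊕ Fin m) = Sum.inr l then ((Ω.filter fun p => p.1 = k).card : ℝ) else 0) - (if (k,l) ∈ Ω then (1:ℝ) else 0) = _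
  simp

lemma lap_inr_inl {n m : ℕ} (Ω : Finset (Fin n × Fin m)) (l : Fin m) (k : Fin n) :
    lap Ω (Sum.inr l) (Sum.inl k) = -(if (k,l) ∈ Ω then (1:ℝ) else 0) := by
  show (if (Sum.inr l : Fin n ⊕ Fin m) = Sum.inl k then ((Ω.filter fun p => p.2 = l).card : ℝ) else 0) - (if (k,l) ∈ Ω then (1:ℝ) else 0) = _
  simp

lemma lap_inr_inr {n m : ℕ} (Ω : Finset (Fin n × Fin m)) (l l' : Fin m) :
    lap Ω (Sum.inr l) (Sum.inr l') = if l = l' then ((Ω.filter fun p => p.2 = l).card : ℝ) else 0 := by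
  show (if (Sum.inr l : Fin n ⊕ Fin m) = Sum.inr l' then ((Ω.filter fun p => p.2 = l).card : ℝ) else 0) - 0 = _
  simp [Sum.inr.injEq]

end LapVals

lemma voltRow {n m : ℕ} {Ω : Finset (Fin n × Fin m)} {i : Fin n} {j : Fin m}
    {v : (Fin n ⊕ Fin m) → ℝ} (hv : IsVoltage Ω i j v) (k : Fin n) :
    ∑ p ∈ Ω, (if p.1 = k then v (Sum.inl p.1) - v (Sum.inr p.2) else 0) = if k = i then 1 else 0 := by
  have h1 := congrFun hv (Sum.inl k)
  simp only [Matrix.mulVec, dotProduct, stdVec, Fintype.sum_sum_type,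
    lap_inl_inl, lap_inl_inr, lap_inr_inl, lap_inr_inr,
    Sum.inl.injEq, sub_zero, zero_sub, ite_mul, zero_mul, neg_mul, one_mul,
    Finset.sum_ite_eq, Finset.mem_univ, if_true, reduceCtorEq, if_false,
    Finset.sum_neg_distrib] at h1
  have hcongr : ∀ p ∈ Ω, (if p.1 = k then v (Sum.inl p.1) - v (Sum.inr p.2) else 0)
      = (if p.1 = k then v (Sum.inl k) - v (Sum.inr p.2) else 0) := by
    intro p _; by_cases hp : p.1 = k <;> simp [hp]
  rw [Finset.sum_congr rfl hcongr, sumFilterFst]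
  have hsub : ∑ l, (if (k,l) ∈ Ω then v (Sum.inl k) - v (Sum.inr l) else 0)
      = (∑ l, if (k,l) ∈ Ω then v (Sum.inl k) else 0) - ∑ l, (if (k,l) ∈ Ω then v (Sum.inr l) else 0) := by
    rw [← Finset.sum_sub_distrib]
    exact Finset.sum_congr rfl fun l _ => by by_cases hl : (k,l) ∈ Ω <;> simp [hl]
  have hconst : ∑ l, (if (k,l) ∈ Ω then v (Sum.inl k) else 0)
      = ((Ω.filter fun p => p.1 = k).card : ℝ) * v (Sum.inl k) := by
    rw [cardFst, Finset.sum_mul]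
    exact Finset.sum_congr rfl fun l _ => by by_cases hl : (k,l) ∈ Ω <;> simp [hl]
  rw [hsub, hconst]
  linarith [h1]

lemma voltCol {n m : ℕ} {Ω : Finset (Fin n × Fin m)} {i : Fin n} {j : Fin m}
    {v : (Fin n ⊕ Fin m) → ℝ} (hv : IsVoltage Ω i j v) (l : Fin m) :
    ∑ p ∈ Ω, (if p.2 = l then v (Sum.inl p.1) - v (Sum.inr p.2) else 0) = if l = j then 1 else 0 := by
  have h1 := congrFun hv (Sum.inr l)
  simp only [Matrix.mulVec, dotProduct, stdVec, Fintype.sum_sum_type,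
    lap_inl_inl, lap_inl_inr, lap_inr_inl, lap_inr_inr,
    Sum.inr.injEq, sub_zero, zero_sub, ite_mul, zero_mul, neg_mul, one_mul,
    Finset.sum_ite_eq, Finset.mem_univ, if_true, reduceCtorEq, if_false,
    Finset.sum_neg_distrib] at h1
  have hcongr : ∀ p ∈ Ω, (if p.2 = l then v (Sum.inl p.1) - v (Sum.inr p.2) else 0)
      = (if p.2 = l then v (Sum.inl p.1) - v (Sum.inr l) else 0) := by
    intro p _; by_cases hp : p.2 = l <;> simp [hp]
  rw [Finset.sum_congr rfl hcongr, sumFilterSnd]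
  have hsub : ∑ k, (if (k,l) ∈ Ω then v (Sum.inl k) - v (Sum.inr l) else 0)
      = (∑ k, if (k,l) ∈ Ω then v (Sum.inl k) else 0) - ∑ k, (if (k,l) ∈ Ω then v (Sum.inr l) else 0) := by
    rw [← Finset.sum_sub_distrib]
    exact Finset.sum_congr rfl fun k _ => by by_cases hk : (k,l) ∈ Ω <;> simp [hk]
  have hconst : ∑ k, (if (k,l) ∈ Ω then v (Sum.inr l) else 0)
      = ((Ω.filter fun p => p.2 = l).card : ℝ) * v (Sum.inr l) := by
    rw [cardSnd, Finset.sum_mul]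
    exact Finset.sum_congr rfl fun k _ => by by_cases hk : (k,l) ∈ Ω <;> simp [hk]
  rw [hsub, hconst]
  linarith [h1]

theorem stmt7 {n m : ℕ} (Ω : Finset (Fin n × Fin m)) (M : Fin n × Fin m → ℝ)
    (ahat : Fin n → ℝ) (bhat : Fin m → ℝ)
    (hmin : ∀ (a : Fin n → ℝ) (b : Fin m → ℝ), lseObj Ω M ahat bhat ≤ lseObj Ω M a b)
    (hnorm : ∀ (a : Fin n → ℝ) (b : Fin m → ℝ), lseObj Ω M a b = lseObj Ω M ahat bhat →
      (∑ k, ahat k ^ 2) + (∑ l, bhat l ^ 2) ≤ (∑ k, a k ^ 2) + (∑ l, b l ^ 2))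
    (i : Fin n) (j : Fin m)
    (hconn : (bipGraph Ω).Reachable (Sum.inl i) (Sum.inr j))
    (v : (Fin n ⊕ Fin m) → ℝ) (hv : IsVoltage Ω i j v) :
    ahat i + bhat j = ∑ p ∈ Ω, (v (Sum.inl p.1) - v (Sum.inr p.2)) * M p := by
  classical
  set res : Fin n × Fin m → ℝ := fun p => ahat p.1 + bhat p.2 - M p with hres
  -- stationarity in rows
  have hS1 : ∀ k : Fin n, ∑ p ∈ Ω, (if p.1 = k then res p else 0) = 0 := by
    intro k
    apply quadStat (C := ∑ p ∈ Ω, (if p.1 = k then (1:ℝ) else 0))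
    · exact Finset.sum_nonneg fun p _ => by positivity
    · intro t
      have h := hmin (fun k' => ahat k' + t * (if k' = k then 1 else 0)) bhat
      have hexp : lseObj Ω M (fun k' => ahat k' + t * (if k' = k then 1 else 0)) bhat
          = lseObj Ω M ahat bhat
            + (2*t*(∑ p ∈ Ω, (if p.1 = k then res p else 0))
               + t^2*(∑ p ∈ Ω, (if p.1 = k then (1:ℝ) else 0))) := by
        simp only [lseObj]
        rw [Finset.mul_sum, Finset.mul_sum, ← Finset.sum_add_distrib, ← Finset.sum_add_distrib]
        exact Finset.sum_congr rfl fun p _ => by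
          by_cases hp : p.1 = k <;> simp [hp, hres] <;> ring
      rw [hexp] at h
      linarith
  have hS2 : ∀ l : Fin m, ∑ p ∈ Ω, (if p.2 = l then res p else 0) = 0 := by
    intro l
    apply quadStat (C := ∑ p ∈ Ω, (if p.2 = l then (1:ℝ) else 0))
    · exact Finset.sum_nonneg fun p _ => by positivity
    · intro t
      have h := hmin ahat (fun l' => bhat l' + t * (if l' = l then 1 else 0))
      have hexp : lseObj Ω M ahat (fun l' => bhat l' + t * (if l' = l then 1 else 0))
          = lseObj Ω M ahat bhat
            + (2*t*(∑ p ∈ Ω, (if p.2 = l then res p else 0))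
               + t^2*(∑ p ∈ Ω, (if p.2 = l then (1:ℝ) else 0))) := by
        simp only [lseObj]
        rw [Finset.mul_sum, Finset.mul_sum, ← Finset.sum_add_distrib, ← Finset.sum_add_distrib]
        exact Finset.sum_congr rfl fun p _ => by
          by_cases hp : p.2 = l <;> simp [hp, hres] <;> ring
      rw [hexp] at h
      linarith
  -- key identities
  have key1 : ∑ p ∈ Ω, ahat p.1 * (v (Sum.inl p.1) - v (Sum.inr p.2)) = ahat i := by
    rw [fiberFst]
    have : ∀ k ∈ Finset.univ, ahat k * (∑ p ∈ Ω, (if p.1 = k then v (Sum.inl p.1) - v (Sum.inr p.2) else 0))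
        = if k = i then ahat k else 0 := fun k _ => by
      rw [voltRow hv k]; by_cases hk : k = i <;> simp [hk]
    rw [Finset.sum_congr rfl this, Finset.sum_ite_eq' Finset.univ i ahat]
    simp
  have key2 : ∑ p ∈ Ω, bhat p.2 * (v (Sum.inl p.1) - v (Sum.inr p.2)) = bhat j := by
    rw [fiberSnd]
    have : ∀ l ∈ Finset.univ, bhat l * (∑ p ∈ Ω, (if p.2 = l then v (Sum.inl p.1) - v (Sum.inr p.2) else 0))
        = if l = j then bhat l else 0 := fun l _ => by
      rw [voltCol hv l]; by_cases hl : l = j <;> simp [hl]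
    rw [Finset.sum_congr rfl this, Finset.sum_ite_eq' Finset.univ j bhat]
    simp
  have key3 : ∑ p ∈ Ω, (v (Sum.inl p.1)) * res p = 0 := by
    have h3 := fiberFst Ω (fun k => v (Sum.inl k)) res
    simp only [hS1, mul_zero, Finset.sum_const_zero] at h3
    simpa using h3
  have key4 : ∑ p ∈ Ω, (v (Sum.inr p.2)) * res p = 0 := by
    have h4 := fiberSnd Ω (fun l => v (Sum.inr l)) res
    simp only [hS2, mul_zero, Finset.sum_const_zero] at h4
    simpa using h4
  have expand : ∑ p ∈ Ω, (v (Sum.inl p.1) - v (Sum.inr p.2)) * M p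
      = (∑ p ∈ Ω, ahat p.1 * (v (Sum.inl p.1) - v (Sum.inr p.2)))
        + (∑ p ∈ Ω, bhat p.2 * (v (Sum.inl p.1) - v (Sum.inr p.2)))
        - ((∑ p ∈ Ω, (v (Sum.inl p.1)) * res p) - (∑ p ∈ Ω, (v (Sum.inr p.2)) * res p)) := by
    rw [← Finset.sum_sub_distrib, ← Finset.sum_add_distrib, ← Finset.sum_sub_distrib]
    exact Finset.sum_congr rfl fun p _ => by simp only [hres]; ring
  rw [expand, key1, key2, key3, key4]
  ring
end

section
/- Fix observed values M_{kℓ} ∈ ℝ for (k,ℓ) ∈ Ω, and let (i,j) ∈ [n]×[m] be such that u_i and v_j lie in the same connected component of G(Ω). If (a,b) and (a',b') both minimize f(a,b) = ∑_{(k,ℓ)∈Ω} (a_k + b_ℓ − M_{kℓ})², then a_i + b_j = a'_i + b'_j. -/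
/-!
STATEMENT 18: If `u_i` and `v_j` lie in the same connected component of `G(Ω)`,
then all least squares minimizers of the additive objective give the same fitted
value at entry `(i,j)`.
-/

open Finset

theorem stmt18 {n m : ℕ} (Ω : Finset (Fin n × Fin m)) (M : Fin n × Fin m → ℝ)
    (i : Fin n) (j : Fin m)
    (hconn : (bipGraph Ω).Reachable (Sum.inl i) (Sum.inr j))
    (a : Fin n → ℝ) (b : Fin m → ℝ) (a' : Fin n → ℝ) (b' : Fin m → ℝ)
    (h1 : ∀ (x : Fin n → ℝ) (y : Fin m → ℝ), lseObj Ω M a b ≤ lseObj Ω M x y)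
    (h2 : ∀ (x : Fin n → ℝ) (y : Fin m → ℝ), lseObj Ω M a' b' ≤ lseObj Ω M x y) :
    a i + b j = a' i + b' j := by
  have heq : lseObj Ω M a b = lseObj Ω M a' b' := le_antisymm (h1 a' b') (h2 a b)
  have hmid := h1 (fun k => (a k + a' k) / 2) (fun l => (b l + b' l) / 2)
  have hexp : lseObj Ω M (fun k => (a k + a' k) / 2) (fun l => (b l + b' l) / 2)
      = (lseObj Ω M a b + lseObj Ω M a' b') / 2
        - ∑ p ∈ Ω, ((a p.1 + b p.2 - (a' p.1 + b' p.2)) / 2) ^ 2 := by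
    simp only [lseObj, ← Finset.sum_add_distrib, Finset.sum_div, ← Finset.sum_sub_distrib]
    exact Finset.sum_congr rfl fun p _ => by ring
  have hsum : ∑ p ∈ Ω, ((a p.1 + b p.2 - (a' p.1 + b' p.2)) / 2) ^ 2 ≤ 0 := by
    rw [hexp, ← heq] at hmid
    linarith
  have key : ∀ p ∈ Ω, a p.1 + b p.2 = a' p.1 + b' p.2 := by
    intro p hp
    have h0 : ∑ p ∈ Ω, ((a p.1 + b p.2 - (a' p.1 + b' p.2)) / 2) ^ 2 = 0 :=
      le_antisymm hsum (Finset.sum_nonneg fun p _ => sq_nonneg _)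
    have := (Finset.sum_eq_zero_iff_of_nonneg (fun p _ => sq_nonneg
      ((a p.1 + b p.2 - (a' p.1 + b' p.2)) / 2))).mp h0 p hp
    have := pow_eq_zero_iff (n := 2) (by norm_num) |>.mp this
    linarith
  set g : Fin n ⊕ Fin m → ℝ := Sum.elim (fun k => a k - a' k) (fun l => -(b l - b' l)) with hg
  have hadj : ∀ x y, (bipGraph Ω).Adj x y → g x = g y := by
    rintro (k | k) (l | l) h
    · exact h.elim
    · have := key (k, l) h
      simp only [hg, Sum.elim_inl, Sum.elim_inr]
      linarith
    · have := key (l, k) h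
      simp only [hg, Sum.elim_inl, Sum.elim_inr]
      linarith
    · exact h.elim
  have hwalk : ∀ {x y : Fin n ⊕ Fin m}, (bipGraph Ω).Walk x y → g x = g y := by
    intro x y w
    induction w with
    | nil => rfl
    | cons h _ ih => exact (hadj _ _ h).trans ih
  have := hwalk hconn.some
  simp only [hg, Sum.elim_inl, Sum.elim_inr] at this
  linarith
end
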